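/- Let 0 < ℓ ≤ 1 and suppose K : [0, π/√(2ℓ)] → ℝ is continuous with K(s) ≥ 2 for all s, and suppose ∫₀^{π/√(2ℓ)} (2ℓ·cos²(√(2ℓ)·s) − sin²(√(2ℓ)·s)·K(s)) ds ≥ 0. Then ℓ = 1 and K(s) = 2 for all s. -/

import Mathlib

/-- Second-variation rigidity: if `0 < ℓ ≤ 1`, `K ≥ 2` on `[0, π/√(2ℓ)]` and
`∫₀^{π/√(2ℓ)} (2ℓ cos²(√(2ℓ) s) − sin²(√(2ℓ) s) K(s)) ds ≥ 0`,
then `ℓ = 1` and `K ≡ 2`. -/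
theorem stmt_6 (ℓ : ℝ) (hℓ0 : 0 < ℓ) (hℓ1 : ℓ ≤ 1) (K : ℝ → ℝ)
    (hcont : ContinuousOn K (Set.Icc 0 (Real.pi / Real.sqrt (2 * ℓ))))
    (hK2 : ∀ s ∈ Set.Icc 0 (Real.pi / Real.sqrt (2 * ℓ)), 2 ≤ K s)
    (hvar : 0 ≤ ∫ s in (0:ℝ)..(Real.pi / Real.sqrt (2 * ℓ)),
      (2 * ℓ * Real.cos (Real.sqrt (2 * ℓ) * s) ^ 2
        - Real.sin (Real.sqrt (2 * ℓ) * s) ^ 2 * K s)) :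
    ℓ = 1 ∧ ∀ s ∈ Set.Icc 0 (Real.pi / Real.sqrt (2 * ℓ)), K s = 2 := by
  set a : ℝ := Real.sqrt (2 * ℓ) with ha_def
  have ha2 : a ^ 2 = 2 * ℓ := Real.sq_sqrt (by linarith)
  have ha : 0 < a := Real.sqrt_pos.mpr (by linarith)
  set T : ℝ := Real.pi / a with hT_def
  have hT : 0 < T := div_pos Real.pi_pos ha
  have haT : a * T = Real.pi := mul_div_cancel₀ _ (ne_of_gt ha)
  set f : ℝ → ℝ := fun s => 2 * ℓ * Real.cos (a * s) ^ 2 - Real.sin (a * s) ^ 2 * K s with hf_def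
  set g : ℝ → ℝ := fun s => (ℓ - 1) + (ℓ + 1) * Real.cos (2 * (a * s)) with hg_def
  -- continuity / integrability
  have hfc : ContinuousOn f (Set.Icc 0 T) := by
    apply ContinuousOn.sub
    · exact (Continuous.continuousOn (by fun_prop))
    · exact ContinuousOn.mul (Continuous.continuousOn (by fun_prop)) hcont
  have hfint : IntervalIntegrable f MeasureTheory.volume 0 T := by
    apply ContinuousOn.intervalIntegrable
    rwa [Set.uIcc_of_le hT.le]
  have hgc : Continuous g := by fun_prop
  have hgint : IntervalIntegrable g MeasureTheory.volume 0 T := hgc.intervalIntegrable _ _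
  -- value of ∫ g
  have hgval : (∫ s in (0:ℝ)..T, g s) = (ℓ - 1) * T := by
    have hderiv : ∀ x ∈ Set.uIcc (0:ℝ) T,
        HasDerivAt (fun y => (ℓ - 1) * y + (ℓ + 1) * Real.sin (2 * (a * y)) / (2 * a)) (g x) x := by
      intro x _
      have h1 : HasDerivAt (fun y : ℝ => 2 * (a * y)) (2 * a) x := by
        simpa [mul_assoc] using (hasDerivAt_id x).const_mul (2 * a)
      have h2 : HasDerivAt (fun y : ℝ => Real.sin (2 * (a * y)))
          (Real.cos (2 * (a * x)) * (2 * a)) x := (Real.hasDerivAt_sin _).comp x h1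
      have h3 := ((h2.const_mul (ℓ + 1)).div_const (2 * a)).const_add 0
      have h4 := ((hasDerivAt_id x).const_mul (ℓ - 1)).add ((h2.const_mul (ℓ + 1)).div_const (2 * a))
      refine h4.congr_deriv ?_
      show _ = ℓ - 1 + (ℓ + 1) * Real.cos (2 * (a * x))
      rw [mul_div_assoc, mul_div_cancel_right₀ _ (mul_pos two_pos ha).ne']
      ring
    rw [intervalIntegral.integral_eq_sub_of_hasDerivAt hderiv hgint]
    have : 2 * (a * T) = 2 * Real.pi := by rw [haT]
    simp [this, Real.sin_two_pi]
  -- pointwise bound f ≤ g on [0, T]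
  have hfg : ∀ s ∈ Set.Icc (0:ℝ) T, f s ≤ g s := by
    intro s hs
    have hK := hK2 s hs
    have hsin : (0:ℝ) ≤ Real.sin (a * s) ^ 2 := sq_nonneg _
    have hc2 : Real.cos (2 * (a * s)) = 2 * Real.cos (a * s) ^ 2 - 1 := Real.cos_two_mul _
    have hs2 : Real.sin (a * s) ^ 2 = 1 - Real.cos (a * s) ^ 2 := Real.sin_sq _
    simp only [hf_def, hg_def]
    nlinarith [sq_nonneg (Real.sin (a * s))]
  have hle : (∫ s in (0:ℝ)..T, f s) ≤ ∫ s in (0:ℝ)..T, g s :=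
    intervalIntegral.integral_mono_on hT.le hfint hgint hfg
  have hvar' : 0 ≤ ∫ s in (0:ℝ)..T, f s := hvar
  have hl1 : ℓ = 1 := by
    rw [hgval] at hle
    nlinarith
  subst hl1
  refine ⟨rfl, ?_⟩
  -- now ∫ g = 0, hence ∫ f = 0
  have hgz : (∫ s in (0:ℝ)..T, g s) = 0 := by rw [hgval]; ring
  have hfz : (∫ s in (0:ℝ)..T, f s) = 0 := le_antisymm (by rw [hgz] at hle; exact hle) hvar'
  -- h := g - f = sin²(as)(K s - 2) ≥ 0 with integral 0
  set h : ℝ → ℝ := fun s => Real.sin (a * s) ^ 2 * (K s - 2) with hh_def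
  have hgfh : ∀ s, h s = g s - f s := by
    intro s
    have hc2 : Real.cos (2 * (a * s)) = 2 * Real.cos (a * s) ^ 2 - 1 := Real.cos_two_mul _
    have hs2 : Real.sin (a * s) ^ 2 = 1 - Real.cos (a * s) ^ 2 := Real.sin_sq _
    simp only [hh_def, hg_def, hf_def]
    nlinarith [hs2]
  have hhint : IntervalIntegrable h MeasureTheory.volume 0 T := by
    apply ContinuousOn.intervalIntegrable
    rw [Set.uIcc_of_le hT.le]
    exact ContinuousOn.mul (Continuous.continuousOn (by fun_prop)) (hcont.sub continuousOn_const)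
  have hhz : (∫ s in (0:ℝ)..T, h s) = 0 := by
    have : (∫ s in (0:ℝ)..T, h s) = (∫ s in (0:ℝ)..T, g s) - ∫ s in (0:ℝ)..T, f s := by
      rw [← intervalIntegral.integral_sub hgint hfint]
      exact intervalIntegral.integral_congr fun s _ => hgfh s
    rw [this, hgz, hfz]; ring
  have hhnn : ∀ x ∈ Set.Ioc (0:ℝ) T, 0 ≤ h x := by
    intro x hx
    have := hK2 x ⟨hx.1.le, hx.2⟩
    have : 0 ≤ K x - 2 := by linarith
    exact mul_nonneg (sq_nonneg _) this
  have hae : h =ᵐ[MeasureTheory.volume.restrict (Set.Ioc (0:ℝ) T)] 0 := by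
    rw [← intervalIntegral.integral_eq_zero_iff_of_le_of_nonneg_ae hT.le
      (MeasureTheory.ae_restrict_of_forall_mem measurableSet_Ioc hhnn) hhint]
    exact hhz
  have hhc : ContinuousOn h (Set.Icc 0 T) :=
    ContinuousOn.mul (Continuous.continuousOn (by fun_prop)) (hcont.sub continuousOn_const)
  have heqOn : Set.EqOn h 0 (Set.Ioo 0 T) := by
    apply MeasureTheory.Measure.eqOn_Ioo_of_ae_eq MeasureTheory.volume
    · exact MeasureTheory.ae_restrict_of_ae_restrict_of_subset Set.Ioo_subset_Ioc_self hae
    · exact hhc.mono (fun x hx => ⟨hx.1.le, hx.2.le⟩)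
    · exact continuousOn_const
  have hKIoo : Set.EqOn K (fun _ => (2:ℝ)) (Set.Ioo 0 T) := by
    intro s hs
    have hsin : 0 < Real.sin (a * s) := by
      apply Real.sin_pos_of_pos_of_lt_pi
      · exact mul_pos ha hs.1
      · rw [← haT]; exact (mul_lt_mul_iff_right₀ ha).mpr hs.2
    have := heqOn hs
    simp only [hh_def, Pi.zero_apply] at this
    have hsq : 0 < Real.sin (a * s) ^ 2 := pow_pos hsin 2
    have : K s - 2 = 0 := by
      rcases mul_eq_zero.mp this with h' | h'
      · exact absurd h' (ne_of_gt hsq)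
      · exact h'
    simpa using by linarith
  have hfinal : Set.EqOn K (fun _ => (2:ℝ)) (Set.Icc 0 T) := by
    apply hKIoo.of_subset_closure hcont continuousOn_const Set.Ioo_subset_Icc_self
    rw [closure_Ioo (ne_of_lt hT)]
  exact fun s hs => hfinal hs
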